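/- Fix c ∈ K and consider the new 2-component equation (ceqnew): 𝔽¹ = u¹₀·u²₀/u²₁, 𝔽² = u²₀·(c·u¹₋₁ − u¹₀)/u¹₋₁. Then the matrices M = [[λ − (c·u¹₀·u²₁ − u¹₀·u²₀ − u¹₁·u²₁)/(u¹₀·u²₁), −u¹₀/u²₁],[u²₁/u¹₀, 0]] and U = [[0, u¹₀/u²₁],[−u²₀/u¹₋₁, λ]] form an MLR for this equation: D_t(M) = S(U)·M − M·U. -/

import Mathlib

open MvPolynomial

/-- Variables: `none` is `λ`; `some (j, ℓ)` is `u^j_ℓ`. -/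
abbrev VarC := Option (Fin 2 × ℤ)

/-- Polynomial ring over `K` in `λ`, `u¹_ℓ`, `u²_ℓ`. -/
abbrev PolyC (K : Type) [Field K] := MvPolynomial VarC K

/-- Field of rational functions over `K` in `λ`, `u¹_ℓ`, `u²_ℓ`. -/
abbrev FC (K : Type) [Field K] := FractionRing (PolyC K)

/-- The spectral parameter `λ`. -/
noncomputable def lam (K : Type) [Field K] : FC K :=
  algebraMap (PolyC K) (FC K) (X none)

/-- The variable `u¹_ℓ`. -/
noncomputable def U1 (K : Type) [Field K] (ℓ : ℤ) : FC K :=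
  algebraMap (PolyC K) (FC K) (X (some (0, ℓ)))

/-- The variable `u²_ℓ`. -/
noncomputable def U2 (K : Type) [Field K] (ℓ : ℤ) : FC K :=
  algebraMap (PolyC K) (FC K) (X (some (1, ℓ)))

/-- `𝔽¹ = u¹₀·u²₀/u²₁` of equation (ceqnew). -/
noncomputable def Feq1 (K : Type) [Field K] : FC K := U1 K 0 * U2 K 0 / U2 K 1

/-- `𝔽² = u²₀·(c·u¹₋₁ − u¹₀)/u¹₋₁` of equation (ceqnew). -/
noncomputable def Feq2 (K : Type) [Field K] (c : K) : FC K :=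
  U2 K 0 * (algebraMap K (FC K) c * U1 K (-1) - U1 K 0) / U1 K (-1)

/-- The matrix `M` of the MLR for equation (ceqnew). -/
noncomputable def Mceq (K : Type) [Field K] (c : K) : Matrix (Fin 2) (Fin 2) (FC K) :=
  !![lam K - (algebraMap K (FC K) c * U1 K 0 * U2 K 1 - U1 K 0 * U2 K 0 -
        U1 K 1 * U2 K 1) / (U1 K 0 * U2 K 1),
      -(U1 K 0 / U2 K 1);
    U2 K 1 / U1 K 0, 0]

/-- The matrix `U` of the MLR for equation (ceqnew). -/
noncomputable def Uceq (K : Type) [Field K] : Matrix (Fin 2) (Fin 2) (FC K) :=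
  !![0, U1 K 0 / U2 K 1; -(U2 K 0 / U1 K (-1)), lam K]

set_option maxHeartbeats 2000000 in
/-- `F` is the field of rational functions over a char-0 field `K` in `λ, u¹_ℓ, u²_ℓ`; `S` is
the field automorphism over `K` fixing `λ` with `S(u^j_ℓ) = u^j_{ℓ+1}`, and `D_t` is the
total derivative of equation (ceqnew) `∂_t u^j = 𝔽^j` with `𝔽¹ = u¹₀u²₀/u²₁`,
`𝔽² = u²₀(cu¹₋₁ − u¹₀)/u¹₋₁` (the unique derivation with `D_t(λ) = 0`,
`D_t(u^j_ℓ) = S^ℓ(𝔽^j)`); both are quantified by these characterizing properties.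
Claim: the matrices `Mceq` and `Uceq` form an MLR for (ceqnew):
`det M ≠ 0` and `D_t(M) = S(U)·M − M·U`. -/
theorem stmt_18 (K : Type) [Field K] [CharZero K] (c : K)
    (S : FC K ≃+* FC K)
    (hSK : ∀ x : K, S (algebraMap K (FC K) x) = algebraMap K (FC K) x)
    (hSlam : S (lam K) = lam K)
    (hSu1 : ∀ ℓ : ℤ, S (U1 K ℓ) = U1 K (ℓ + 1))
    (hSu2 : ∀ ℓ : ℤ, S (U2 K ℓ) = U2 K (ℓ + 1))
    (Dt : FC K → FC K)
    (hDadd : ∀ x y, Dt (x + y) = Dt x + Dt y)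
    (hDmul : ∀ x y, Dt (x * y) = x * Dt y + Dt x * y)
    (hDK : ∀ x : K, Dt (algebraMap K (FC K) x) = 0)
    (hDlam : Dt (lam K) = 0)
    (hDu1 : ∀ ℓ : ℤ, Dt (U1 K ℓ) = (S ^ ℓ) (Feq1 K))
    (hDu2 : ∀ ℓ : ℤ, Dt (U2 K ℓ) = (S ^ ℓ) (Feq2 K c)) :
    (Mceq K c).det ≠ 0 ∧
    (Mceq K c).map Dt = (Uceq K).map ⇑S * Mceq K c - Mceq K c * Uceq K := by
  -- derived properties of the derivation `Dt`
  have hDzero : Dt 0 = 0 := by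
    have h := hDadd 0 0
    rw [add_zero] at h
    exact (right_eq_add.mp h)
  have hDneg : ∀ x, Dt (-x) = -Dt x := by
    intro x
    have h : Dt x + Dt (-x) = 0 := by rw [← hDadd, add_neg_cancel, hDzero]
    exact eq_neg_of_add_eq_zero_right h
  have hDsub : ∀ x y, Dt (x - y) = Dt x - Dt y := by
    intro x y
    rw [sub_eq_add_neg, hDadd, hDneg, ← sub_eq_add_neg]
  have hDdiv : ∀ x y : FC K, y ≠ 0 → Dt (x / y) = (Dt x * y - x * Dt y) / (y * y) := by
    intro x y hy
    have h : Dt x = x / y * Dt y + Dt (x / y) * y := by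
      rw [← hDmul, div_mul_cancel₀ _ hy]
    rw [eq_div_iff (mul_ne_zero hy hy)]
    field_simp at h
    linear_combination -h
  -- variables are nonzero
  have hinj : Function.Injective (algebraMap (PolyC K) (FC K)) :=
    IsFractionRing.injective _ _
  have hU1 : ∀ ℓ : ℤ, U1 K ℓ ≠ 0 := by
    intro ℓ
    unfold U1
    exact (map_ne_zero_iff _ hinj).mpr (MvPolynomial.X_ne_zero _)
  have hU2 : ∀ ℓ : ℤ, U2 K ℓ ≠ 0 := by
    intro ℓ
    unfold U2
    exact (map_ne_zero_iff _ hinj).mpr (MvPolynomial.X_ne_zero _)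
  -- base derivative values
  have hb0 : Dt (U1 K 0) = U1 K 0 * U2 K 0 / U2 K 1 := by
    simpa [Feq1] using hDu1 0
  have hb1 : Dt (U1 K 1) = U1 K 1 * U2 K 1 / U2 K 2 := by
    simpa [Feq1, zpow_one, map_div₀, hSu1, hSu2] using hDu1 1
  have hd0 : Dt (U2 K 0) = U2 K 0 * (algebraMap K (FC K) c * U1 K (-1) - U1 K 0) / U1 K (-1) := by
    simpa [Feq2] using hDu2 0
  have hd1 : Dt (U2 K 1) = U2 K 1 * (algebraMap K (FC K) c * U1 K 0 - U1 K 1) / U1 K 0 := by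
    simpa [Feq2, zpow_one, map_div₀, map_sub, map_mul, hSK, hSu1, hSu2] using hDu2 1
  have n1m : U1 K (-1) ≠ 0 := hU1 (-1)
  have n10 : U1 K 0 ≠ 0 := hU1 0
  have n11 : U1 K 1 ≠ 0 := hU1 1
  have n20 : U2 K 0 ≠ 0 := hU2 0
  have n21 : U2 K 1 ≠ 0 := hU2 1
  have n22 : U2 K 2 ≠ 0 := hU2 2
  constructor
  · have hdet : (Mceq K c).det = 1 := by
      rw [Matrix.det_fin_two]
      simp [Mceq]
      rw [div_mul_div_comm, mul_comm (U2 K 1) (U1 K 0), div_self (mul_ne_zero (hU1 0) (hU2 1))]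
    rw [hdet]
    exact one_ne_zero
  · ext i j
    fin_cases i <;> fin_cases j <;>
      simp only [Mceq, Uceq, Matrix.map_apply, Matrix.sub_apply, Matrix.mul_apply,
        Fin.sum_univ_two, Matrix.cons_val', Matrix.cons_val_zero, Matrix.cons_val_one,
        Matrix.head_cons, Matrix.head_fin_const, Matrix.empty_val', Matrix.cons_val_fin_one,
        Matrix.of_apply, Fin.isValue, Fin.mk_zero, Fin.mk_one]
    · -- entry (0,0)
      rw [hDsub, hDlam, hDdiv _ _ (mul_ne_zero (hU1 0) (hU2 1))]
      simp only [hDsub, hDmul, hDK, hb0, hb1, hd0, hd1, map_zero, map_neg, map_div₀,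
        hSlam, hSu1, hSu2, zero_add, neg_add_cancel, Int.reduceAdd, Int.reduceNeg,
        mul_zero, zero_mul, add_zero, zero_sub, sub_zero]
      field_simp
      ring_nf
    · -- entry (0,1)
      rw [hDneg, hDdiv _ _ (hU2 1)]
      simp only [hDsub, hDmul, hDK, hb0, hb1, hd0, hd1, map_zero, map_neg, map_div₀,
        hSlam, hSu1, hSu2, zero_add, neg_add_cancel, Int.reduceAdd, Int.reduceNeg,
        mul_zero, zero_mul, add_zero, zero_sub, sub_zero]
      field_simp
      ring
    · -- entry (1,0)
      rw [hDdiv _ _ (hU1 0)]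
      simp only [hDsub, hDmul, hDK, hb0, hb1, hd0, hd1, map_zero, map_neg, map_div₀,
        hSlam, hSu1, hSu2, zero_add, neg_add_cancel, Int.reduceAdd, Int.reduceNeg,
        mul_zero, zero_mul, add_zero, zero_sub, sub_zero]
      field_simp
      ring
    · -- entry (1,1)
      rw [hDzero]
      simp only [map_zero, map_neg, map_div₀, hSlam, hSu1, hSu2, zero_add,
        neg_add_cancel, Int.reduceAdd, Int.reduceNeg, mul_zero, zero_mul, add_zero,
        zero_sub, sub_zero]
      field_simp
      ring
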